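/- For a square-summable two-sided sequence a: ℤ → ℂ, ‖Da‖²_{ℓ²(ℤ)} ≤ ‖a‖_{ℓ²(ℤ)} · ‖D²a‖_{ℓ²(ℤ)}, where (Da)(n) := a(n+1) − a(n) and D²a(n) = a(n+2) − 2a(n+1) + a(n). -/

import Mathlib

open Complex ComplexConjugate

/-- Cauchy–Schwarz for tsums. -/
lemma tsum_mul_le_sqrt_mul_sqrt_aux {f g : ℤ → ℝ} (hf0 : ∀ n, 0 ≤ f n) (hg0 : ∀ n, 0 ≤ g n)
    (hf : Summable fun n => f n ^ 2) (hg : Summable fun n => g n ^ 2) :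
    ∑' n, f n * g n ≤ Real.sqrt (∑' n, f n ^ 2) * Real.sqrt (∑' n, g n ^ 2) := by
  have hsum : Summable fun n => f n * g n := by
    apply Summable.of_nonneg_of_le (fun n => mul_nonneg (hf0 n) (hg0 n))
      (fun n => ?_) ((hf.add hg).div_const 2)
    have := sq_nonneg (f n - g n)
    nlinarith
  refine Summable.tsum_le_of_sum_le hsum fun s => ?_
  refine (Real.sum_mul_le_sqrt_mul_sqrt s f g).trans ?_
  gcongr <;> exact Summable.sum_le_tsum s (fun n _ => sq_nonneg _) ‹_›

lemma shift_summable {a : ℤ → ℂ} (h : Summable fun n => ‖a n‖ ^ 2) (k : ℤ) :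
    Summable fun n => ‖a (n + k)‖ ^ 2 := by
  have := ((Equiv.addRight k).summable_iff (f := fun n : ℤ => ‖a n‖ ^ 2)).mpr h
  simpa [Function.comp_def] using this

lemma diff_summable {a : ℤ → ℂ} (h : Summable fun n => ‖a n‖ ^ 2) :
    Summable fun n => ‖a (n + 1) - a n‖ ^ 2 := by
  apply Summable.of_nonneg_of_le (fun n => by positivity) (fun n => ?_)
    (((shift_summable h 1).add h).mul_left 2)
  have h1 : ‖a (n + 1) - a n‖ ≤ ‖a (n + 1)‖ + ‖a n‖ := norm_sub_le _ _
  have h2 : (0:ℝ) ≤ ‖a (n + 1) - a n‖ := norm_nonneg _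
  nlinarith [sq_nonneg (‖a (n + 1)‖ - ‖a n‖), mul_self_le_mul_self h2 h1]

set_option maxHeartbeats 1000000 in
/-- Copson's inequality on the whole line. -/
theorem copson_line (a : ℤ → ℂ) (h : Summable fun n => ‖a n‖ ^ 2) :
    ∑' n : ℤ, ‖a (n + 1) - a n‖ ^ 2 ≤
      Real.sqrt (∑' n : ℤ, ‖a n‖ ^ 2) *
        Real.sqrt (∑' n : ℤ, ‖a (n + 2) - 2 * a (n + 1) + a n‖ ^ 2) := by
  set D : ℤ → ℂ := fun n => a (n + 1) - a n with hDdef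
  set E : ℤ → ℂ := fun n => a (n + 2) - 2 * a (n + 1) + a n with hEdef
  have hED : ∀ n, E n = D (n + 1) - D n := by
    intro n; simp only [hDdef, hEdef]; ring_nf
  have hD : Summable fun n => ‖D n‖ ^ 2 := diff_summable h
  have hE : Summable fun n => ‖E n‖ ^ 2 := by
    have := diff_summable hD
    simpa only [← hED] using this
  have hsub : ∀ (f : ℤ → ℂ), (Summable fun n => ‖f n‖ ^ 2) →
      Summable fun n => ‖f (n - 1)‖ ^ 2 := by
    intro f hf
    have := ((Equiv.subRight (1:ℤ)).summable_iff (f := fun n : ℤ => ‖f n‖ ^ 2)).mpr hf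
    simpa [Function.comp_def] using this
  have hEsh : Summable fun n => ‖E (n - 1)‖ ^ 2 := hsub E hE
  -- auxiliary summabilities of products
  have prodsum : ∀ (f g : ℤ → ℂ), (Summable fun n => ‖f n‖ ^ 2) →
      (Summable fun n => ‖g n‖ ^ 2) → Summable fun n => (f n * conj (g n)).re := by
    intro f g hf hg
    apply Summable.of_norm
    apply Summable.of_nonneg_of_le (fun n => norm_nonneg _) (fun n => ?_)
      ((hf.add hg).div_const 2)
    have h1 : |(f n * conj (g n)).re| ≤ ‖f n * conj (g n)‖ := Complex.abs_re_le_norm _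
    have h2 : ‖f n * conj (g n)‖ = ‖f n‖ * ‖g n‖ := by
      rw [norm_mul, RCLike.norm_conj]
    have := sq_nonneg (‖f n‖ - ‖g n‖)
    simp only [Pi.add_apply, Real.norm_eq_abs]
    nlinarith
  have hP : Summable fun n => (D n * conj (a (n + 1))).re :=
    prodsum D (fun n => a (n + 1)) hD (shift_summable h 1)
  have hQ : Summable fun n => (D n * conj (a n)).re := prodsum D a hD h
  have hG : Summable fun n => (D (n - 1) * conj (a n)).re := by
    exact prodsum (fun n => D (n - 1)) a (hsub D hD) h
  have hR : Summable fun n => (E (n - 1) * conj (a n)).re := prodsum _ a hEsh h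
  -- pointwise identity : ‖D n‖² = P n - Q n
  have hpt : ∀ n, ‖D n‖ ^ 2 = (D n * conj (a (n + 1))).re - (D n * conj (a n)).re := by
    intro n
    have : ‖D n‖ ^ 2 = (D n * conj (D n)).re := by
      rw [Complex.mul_conj]
      simp [Complex.normSq_eq_norm_sq, sq]
    rw [this, hDdef]
    simp only [map_sub, mul_sub]
    simp [Complex.sub_re]
  -- shift identity: ∑ P = ∑ G
  have hshift : ∑' n : ℤ, (D n * conj (a (n + 1))).re
      = ∑' n : ℤ, (D (n - 1) * conj (a n)).re := by
    have := (Equiv.addRight (1:ℤ)).tsum_eq (fun n => (D (n - 1) * conj (a n)).re)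
    simp only [Equiv.coe_addRight, add_sub_cancel_right] at this
    exact this
  have key : ∑' n : ℤ, ‖D n‖ ^ 2 = ∑' n : ℤ, (-(E (n - 1) * conj (a n))).re := by
    calc ∑' n : ℤ, ‖D n‖ ^ 2
        = ∑' n : ℤ, ((D n * conj (a (n + 1))).re - (D n * conj (a n)).re) :=
          tsum_congr hpt
      _ = (∑' n : ℤ, (D n * conj (a (n + 1))).re) - ∑' n : ℤ, (D n * conj (a n)).re :=
          Summable.tsum_sub hP hQ
      _ = (∑' n : ℤ, (D (n - 1) * conj (a n)).re) - ∑' n : ℤ, (D n * conj (a n)).re := by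
          rw [hshift]
      _ = ∑' n : ℤ, ((D (n - 1) * conj (a n)).re - (D n * conj (a n)).re) :=
          (Summable.tsum_sub hG hQ).symm
      _ = ∑' n : ℤ, (-(E (n - 1) * conj (a n))).re := by
          refine tsum_congr fun n => ?_
          have : E (n - 1) = D n - D (n - 1) := by
            rw [hED (n - 1)]; ring_nf
          rw [this, show -((D n - D (n - 1)) * conj (a n))
            = D (n - 1) * conj (a n) - D n * conj (a n) by ring, Complex.sub_re]
  -- bound
  have hbound : ∑' n : ℤ, (-(E (n - 1) * conj (a n))).re
      ≤ ∑' n : ℤ, ‖a n‖ * ‖E (n - 1)‖ := by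
    have hsum2 : Summable fun n => ‖a n‖ * ‖E (n - 1)‖ := by
      apply Summable.of_nonneg_of_le (fun n => by positivity) (fun n => ?_)
        ((h.add hEsh).div_const 2)
      have := sq_nonneg (‖a n‖ - ‖E (n - 1)‖)
      nlinarith
    refine Summable.tsum_le_tsum (fun n => ?_) (by simpa using hR.neg) hsum2
    have h1 : (-(E (n - 1) * conj (a n))).re ≤ ‖-(E (n - 1) * conj (a n))‖ :=
      Complex.re_le_norm _
    refine h1.trans ?_
    rw [norm_neg, norm_mul, RCLike.norm_conj, mul_comm]
  have hCS : ∑' n : ℤ, ‖a n‖ * ‖E (n - 1)‖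
      ≤ Real.sqrt (∑' n : ℤ, ‖a n‖ ^ 2) * Real.sqrt (∑' n : ℤ, ‖E (n - 1)‖ ^ 2) :=
    tsum_mul_le_sqrt_mul_sqrt_aux (fun n => norm_nonneg _) (fun n => norm_nonneg _) h hEsh
  have hEeq : ∑' n : ℤ, ‖E (n - 1)‖ ^ 2 = ∑' n : ℤ, ‖E n‖ ^ 2 := by
    have := (Equiv.subRight (1:ℤ)).tsum_eq (fun n => ‖E n‖ ^ 2)
    simpa using this
  calc ∑' n : ℤ, ‖a (n + 1) - a n‖ ^ 2
      = ∑' n : ℤ, (-(E (n - 1) * conj (a n))).re := key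
    _ ≤ ∑' n : ℤ, ‖a n‖ * ‖E (n - 1)‖ := hbound
    _ ≤ Real.sqrt (∑' n : ℤ, ‖a n‖ ^ 2) * Real.sqrt (∑' n : ℤ, ‖E (n - 1)‖ ^ 2) := hCS
    _ = Real.sqrt (∑' n : ℤ, ‖a n‖ ^ 2) *
        Real.sqrt (∑' n : ℤ, ‖a (n + 2) - 2 * a (n + 1) + a n‖ ^ 2) := by rw [hEeq]
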